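/- Let P be a finite p-group, H a cyclic subgroup of P, g an element centralizing H, N a normal subgroup of P, and S a subgroup of P containing N with N_P(S) ≥ S. Then the map sending HxN_P(S) to H̃x̃N_{P̃}(S̃) is a bijection from the double cosets H\P/N_P(S) to the double cosets H̃\P̃/N_{P̃}(S̃), where tildes denote images modulo N; moreover H^x ∩ N_P(S) ≤ S if and only if H̃^x̃ ∩ N_{P̃}(S̃) ≤ S̃. -/

import Mathlib

section Aux

variable {P : Type*} [Group P]

lemma aux_comap_map (N S : Subgroup P) [N.Normal] (hNS : N ≤ S) :
    (S.map (QuotientGroup.mk' N)).comap (QuotientGroup.mk' N) = S := by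
  rw [Subgroup.comap_map_eq, QuotientGroup.ker_mk']
  exact sup_eq_left.2 hNS

lemma aux_normalizer_map (N S : Subgroup P) [N.Normal] (hNS : N ≤ S) :
    (Subgroup.normalizer ((S.map (QuotientGroup.mk' N) : Subgroup (P ⧸ N)) : Set (P ⧸ N))) = (Subgroup.normalizer (S : Set P)).map (QuotientGroup.mk' N) := by
  have hsurj : Function.Surjective (QuotientGroup.mk' N) := QuotientGroup.mk'_surjective N
  have h1 : (Subgroup.normalizer ((S.map (QuotientGroup.mk' N) : Subgroup (P ⧸ N)) : Set (P ⧸ N))).comap (QuotientGroup.mk' N)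
      = (Subgroup.normalizer (S : Set P)) := by
    rw [Subgroup.comap_normalizer_eq_of_surjective _ hsurj, aux_comap_map N S hNS]
  rw [← h1, Subgroup.map_comap_eq_self_of_surjective hsurj _]

end Aux

/-- Let `P` be a finite `p`-group, `H` a cyclic subgroup, `g` an element centralizing `H`,
`N ⊴ P`, and `N ≤ S ≤ N_P(S)`. Then `HxN_P(S) ↦ H̃x̃N_{P̃}(S̃)` is a bijection of double-coset
spaces `H\P/N_P(S) → H̃\P̃/N_{P̃}(S̃)` (tildes denoting images mod `N`); moreover
`H^x ∩ N_P(S) ≤ S` iff `H̃^x̃ ∩ N_{P̃}(S̃) ≤ S̃`. -/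
theorem stmt13 (p : ℕ) (hp : p.Prime) (P : Type*) [Group P] [Finite P]
    (hP : IsPGroup p P)
    (H : Subgroup P) (hH : IsCyclic H) (g : P) (hg : g ∈ Subgroup.centralizer (H : Set P))
    (N S : Subgroup P) [N.Normal] (hNS : N ≤ S) (hSn : S ≤ (Subgroup.normalizer (S : Set P))) :
    (∃ f : DoubleCoset.Quotient (H : Set P) ((Subgroup.normalizer (S : Set P)) : Set P) ≃
        DoubleCoset.Quotient ((H.map (QuotientGroup.mk' N) : Subgroup (P ⧸ N)) : Set (P ⧸ N))
          (((Subgroup.normalizer ((S.map (QuotientGroup.mk' N) : Subgroup (P ⧸ N)) : Set (P ⧸ N))) : Subgroup (P ⧸ N)) : Set (P ⧸ N)),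
      ∀ x : P,
        f (DoubleCoset.mk H (Subgroup.normalizer (S : Set P)) x)
          = DoubleCoset.mk (H.map (QuotientGroup.mk' N)) (Subgroup.normalizer ((S.map (QuotientGroup.mk' N) : Subgroup (P ⧸ N)) : Set (P ⧸ N)))
              (QuotientGroup.mk' N x)) ∧
    ∀ x : P,
      (H.map (MulAut.conj x⁻¹).toMonoidHom ⊓ (Subgroup.normalizer (S : Set P)) ≤ S ↔
        (H.map (QuotientGroup.mk' N)).map
            (MulAut.conj ((QuotientGroup.mk' N) x)⁻¹).toMonoidHom ⊓
            (Subgroup.normalizer ((S.map (QuotientGroup.mk' N) : Subgroup (P ⧸ N)) : Set (P ⧸ N)))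
          ≤ S.map (QuotientGroup.mk' N)) := by
  classical
  set π := QuotientGroup.mk' N with hπdef
  have hsurj : Function.Surjective π := QuotientGroup.mk'_surjective N
  have hNSn : N ≤ (Subgroup.normalizer (S : Set P)) := hNS.trans hSn
  have hnorm : (Subgroup.normalizer ((S.map π : Subgroup (P ⧸ N)) : Set (P ⧸ N))) = (Subgroup.normalizer (S : Set P)).map π := aux_normalizer_map N S hNS
  constructor
  · -- the bijection
    have hresp : ∀ a b : P, DoubleCoset.setoid (H : Set P) ((Subgroup.normalizer (S : Set P)) : Set P) a b →
        DoubleCoset.setoid ((H.map π : Subgroup (P ⧸ N)) : Set (P ⧸ N))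
          (((Subgroup.normalizer ((S.map π : Subgroup (P ⧸ N)) : Set (P ⧸ N))) : Subgroup (P ⧸ N)) : Set (P ⧸ N)) (π a) (π b) := by
      intro a b hab
      rw [DoubleCoset.rel_iff] at hab ⊢
      obtain ⟨h, hh, k, hk, rfl⟩ := hab
      refine ⟨π h, ⟨h, hh, rfl⟩, π k, ?_, by simp⟩
      rw [hnorm]; exact ⟨k, hk, rfl⟩
    refine ⟨Equiv.ofBijective (Quotient.map' π hresp) ⟨?_, ?_⟩, fun x => rfl⟩
    · -- injective
      intro a b hab
      induction a using Quotient.inductionOn' with | h a =>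
      induction b using Quotient.inductionOn' with | h b =>
      apply Quotient.sound'
      have : DoubleCoset.mk (H.map π) (Subgroup.normalizer ((S.map π : Subgroup (P ⧸ N)) : Set (P ⧸ N))) (π a)
          = DoubleCoset.mk (H.map π) (Subgroup.normalizer ((S.map π : Subgroup (P ⧸ N)) : Set (P ⧸ N))) (π b) := hab
      rw [DoubleCoset.eq] at this
      obtain ⟨h', ⟨h, hh, rfl⟩, k', hk', heq⟩ := this
      rw [hnorm] at hk'
      obtain ⟨k, hk, rfl⟩ := hk'
      rw [DoubleCoset.rel_iff]
      have : π b = π (h * a * k) := by simpa using heq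
      rw [hπdef, QuotientGroup.mk'_eq_mk'] at this
      obtain ⟨n, hn, hbn⟩ := this
      refine ⟨h, hh, k * n⁻¹, (Subgroup.normalizer (S : Set P)).mul_mem hk ((Subgroup.normalizer (S : Set P)).inv_mem (hNSn hn)), ?_⟩
      rw [← mul_assoc, ← hbn]
      group
    · -- surjective
      intro q
      induction q using Quotient.inductionOn' with | h y =>
      obtain ⟨x, rfl⟩ := hsurj y
      exact ⟨DoubleCoset.mk H (Subgroup.normalizer (S : Set P)) x, rfl⟩
  · -- the inf condition
    intro x
    have hconj : (H.map π).map (MulAut.conj (π x)⁻¹).toMonoidHom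
        = (H.map (MulAut.conj x⁻¹).toMonoidHom).map π := by
      rw [Subgroup.map_map, Subgroup.map_map]
      congr 1
    have hinf : (H.map (MulAut.conj x⁻¹).toMonoidHom).map π ⊓ (Subgroup.normalizer ((S.map π : Subgroup (P ⧸ N)) : Set (P ⧸ N)))
        = (H.map (MulAut.conj x⁻¹).toMonoidHom ⊓ (Subgroup.normalizer (S : Set P))).map π := by
      rw [hnorm]
      apply le_antisymm
      · rintro z ⟨⟨a, ha, rfl⟩, b, hb, hba⟩
        have : π (a * b⁻¹) = 1 := by
          rw [map_mul, map_inv, hba, mul_inv_cancel]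
        have hab : a * b⁻¹ ∈ N := by
          rwa [← QuotientGroup.ker_mk' N, MonoidHom.mem_ker]
        have haS : a ∈ (Subgroup.normalizer (S : Set P)) := by
          have := (Subgroup.normalizer (S : Set P)).mul_mem (hNSn hab) hb
          simpa using this
        exact ⟨a, ⟨ha, haS⟩, rfl⟩
      · exact Subgroup.map_inf_le _ _ _
    rw [hconj, hinf]
    constructor
    · intro hle
      exact le_trans (Subgroup.map_mono hle) le_rfl
    · intro hle
      have h1 := Subgroup.comap_mono (f := π) hle
      have h2 : H.map (MulAut.conj x⁻¹).toMonoidHom ⊓ (Subgroup.normalizer (S : Set P))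
          ≤ ((H.map (MulAut.conj x⁻¹).toMonoidHom ⊓ (Subgroup.normalizer (S : Set P))).map π).comap π :=
        Subgroup.le_comap_map _ _
      calc H.map (MulAut.conj x⁻¹).toMonoidHom ⊓ (Subgroup.normalizer (S : Set P))
          ≤ (S.map π).comap π := le_trans h2 h1
        _ = S := aux_comap_map N S hNS
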